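/- If f : [0,1] → ℝ is continuous, then for every n > 1 and x ∈ [0,1], |R_n(f;x) − f(x)| ≤ ω(n^{−1/2}) (1 + x(1−x)(1 − min{x,1−x})), where ω is the modulus of continuity of f. -/

import Mathlib

/-- Generalized rising factorial with increment `h`: `x^(m,h) = x(x+h)···(x+(m-1)h)`. -/
noncomputable def rfac (x h : ℝ) (m : ℕ) : ℝ := ∏ i ∈ Finset.range m, (x + i * h)

/-- Pólya urn probability `p_{n,k}^{a,b,c}`. -/
noncomputable def polyaProb (a b c : ℝ) (n k : ℕ) : ℝ :=
  (n.choose k : ℝ) * rfac a c k * rfac b c (n - k) / rfac (a + b) c n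

/-- The operator `R_n(f;x)` with `c = -min{x,1-x}/(n-1)`. -/
noncomputable def Rop (n : ℕ) (f : ℝ → ℝ) (x : ℝ) : ℝ :=
  ∑ k ∈ Finset.range (n + 1),
    polyaProb x (1 - x) (-(min x (1 - x)) / ((n : ℝ) - 1)) n k * f ((k : ℝ) / n)

/-- Modulus of continuity of `f` on `[a,b]`. -/
noncomputable def modulus (f : ℝ → ℝ) (a b δ : ℝ) : ℝ :=
  sSup {d : ℝ | ∃ u ∈ Set.Icc a b, ∃ v ∈ Set.Icc a b, |u - v| ≤ δ ∧ d = |f u - f v|}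

lemma rfac_zero (x h : ℝ) : rfac x h 0 = 1 := by simp [rfac]

lemma rfac_succ (x h : ℝ) (m : ℕ) : rfac x h (m+1) = rfac x h m * (x + m * h) := by
  simp [rfac, Finset.prod_range_succ]

lemma rfac_succ' (x h : ℝ) (m : ℕ) : rfac x h (m+1) = x * rfac (x + h) h m := by
  rw [rfac, Finset.prod_range_succ']
  simp only [Nat.cast_zero, zero_mul, add_zero]
  rw [mul_comm, rfac]
  congr 1
  apply Finset.prod_congr rfl
  intro i _
  push_cast; ring

lemma rfac_pos (x h : ℝ) (m : ℕ) (hp : ∀ i < m, 0 < x + i * h) : 0 < rfac x h m := by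
  apply Finset.prod_pos
  intro i hi
  exact hp i (Finset.mem_range.mp hi)

lemma rfac_nonneg (x h : ℝ) (m : ℕ) (hp : ∀ i < m, 0 ≤ x + i * h) : 0 ≤ rfac x h m := by
  apply Finset.prod_nonneg
  intro i hi
  exact hp i (Finset.mem_range.mp hi)

lemma vander (a b c : ℝ) : ∀ n : ℕ,
    ∑ k ∈ Finset.range (n+1), (n.choose k : ℝ) * rfac a c k * rfac b c (n-k)
      = rfac (a+b) c n := by
  intro n
  induction n with
  | zero => simp [rfac]
  | succ n ih =>
    rw [rfac_succ (a+b) c n, ← ih, Finset.sum_mul]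
    have key : ∀ k ∈ Finset.range (n+1),
        (n.choose k : ℝ) * rfac a c k * rfac b c (n-k) * (a + b + n * c)
        = (n.choose k : ℝ) * rfac a c (k+1) * rfac b c (n-k)
          + (n.choose k : ℝ) * rfac a c k * rfac b c (n-k+1) := by
      intro k hk
      have hk' : k ≤ n := Nat.lt_succ_iff.mp (Finset.mem_range.mp hk)
      rw [rfac_succ a c k, rfac_succ b c (n-k)]
      have : ((n-k : ℕ) : ℝ) = (n : ℝ) - k := by
        push_cast [Nat.cast_sub hk']; ring
      rw [this]; ring
    rw [Finset.sum_congr rfl key, Finset.sum_add_distrib]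
    -- first piece
    have h1 : ∑ k ∈ Finset.range (n+1), (n.choose k : ℝ) * rfac a c k * rfac b c (n-k+1)
        = ∑ k ∈ Finset.range (n+2), (n.choose k : ℝ) * rfac a c k * rfac b c (n+1-k) := by
      rw [Finset.sum_range_succ (fun k => (n.choose k : ℝ) * rfac a c k * rfac b c (n+1-k)) (n+1)]
      simp only [Nat.choose_succ_self, Nat.cast_zero, zero_mul, add_zero]
      apply Finset.sum_congr rfl
      intro k hk
      have hk' : k ≤ n := Nat.lt_succ_iff.mp (Finset.mem_range.mp hk)
      congr 2
      omega
    rw [h1]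
    -- now RHS (goal LHS) : sum over range (n+2) of C(n+1,k)...
    rw [Finset.sum_range_succ' (fun k => ((n+1).choose k : ℝ) * rfac a c k * rfac b c (n+1-k)) (n+1)]
    rw [Finset.sum_range_succ' (fun k => (n.choose k : ℝ) * rfac a c k * rfac b c (n+1-k)) (n+1)]
    simp only [Nat.choose_zero_right, Nat.cast_one, Nat.sub_zero]
    have h2 : ∀ j ∈ Finset.range (n+1),
        ((n+1).choose (j+1) : ℝ) * rfac a c (j+1) * rfac b c (n+1-(j+1))
        = (n.choose j : ℝ) * rfac a c (j+1) * rfac b c (n-j)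
          + (n.choose (j+1) : ℝ) * rfac a c (j+1) * rfac b c (n+1-(j+1)) := by
      intro j hj
      have : (n+1).choose (j+1) = n.choose j + n.choose (j+1) := Nat.choose_succ_succ n j
      rw [this]
      have hsub : n + 1 - (j+1) = n - j := by omega
      rw [hsub]
      push_cast; ring
    rw [Finset.sum_congr rfl h2, Finset.sum_add_distrib]
    ring

lemma vander1 (a b c : ℝ) (n : ℕ) :
    ∑ k ∈ Finset.range (n+1+1), (k : ℝ) * ((((n+1)).choose k : ℝ) * rfac a c k * rfac b c (n+1-k))
      = ((n:ℝ)+1) * a * rfac (a+b+c) c n := by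
  rw [Finset.sum_range_succ' (fun k => (k : ℝ) * (((n+1).choose k : ℝ) * rfac a c k * rfac b c (n+1-k))) (n+1)]
  simp only [Nat.cast_zero, zero_mul, add_zero]
  have key : ∀ j ∈ Finset.range (n+1),
      (((j:ℕ)+1 : ℕ) : ℝ) * (((n+1).choose (j+1) : ℝ) * rfac a c (j+1) * rfac b c (n+1-(j+1)))
      = ((n:ℝ)+1) * a * ((n.choose j : ℝ) * rfac (a+c) c j * rfac b c (n-j)) := by
    intro j hj
    have hc : (j+1) * (n+1).choose (j+1) = (n+1) * n.choose j := by
      rw [mul_comm]; exact (Nat.add_one_mul_choose_eq n j).symm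
    have hc' : ((j:ℝ)+1) * (((n+1).choose (j+1) : ℝ)) = ((n:ℝ)+1) * (n.choose j : ℝ) := by
      exact_mod_cast congrArg (Nat.cast : ℕ → ℝ) hc
    have hsub : n + 1 - (j+1) = n - j := by omega
    rw [hsub, rfac_succ' a c j]
    push_cast
    linear_combination (a * rfac (a+c) c j * rfac b c (n-j)) * hc'
  rw [Finset.sum_congr rfl key, ← Finset.mul_sum, vander (a+c) b c n]
  ring_nf

lemma vander2 (a b c : ℝ) (n : ℕ) :
    ∑ k ∈ Finset.range (n+2+1), (k : ℝ) * ((k:ℝ)-1) * ((((n+2)).choose k : ℝ) * rfac a c k * rfac b c (n+2-k))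
      = ((n:ℝ)+2) * ((n:ℝ)+1) * a * (a+c) * rfac (a+b+2*c) c n := by
  rw [Finset.sum_range_succ' (fun k => (k : ℝ) * ((k:ℝ)-1) * (((n+2).choose k : ℝ) * rfac a c k * rfac b c (n+2-k))) (n+2)]
  simp only [Nat.cast_zero, zero_mul, add_zero]
  have key : ∀ j ∈ Finset.range (n+2),
      (((j:ℕ)+1 : ℕ) : ℝ) * ((((j:ℕ)+1:ℕ):ℝ)-1) * (((n+2).choose (j+1) : ℝ) * rfac a c (j+1) * rfac b c (n+2-(j+1)))
      = ((n:ℝ)+2) * a * ((j:ℝ) * ((((n+1)).choose j : ℝ) * rfac (a+c) c j * rfac b c (n+1-j))) := by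
    intro j hj
    have hc : (j+1) * (n+2).choose (j+1) = (n+2) * (n+1).choose j := by
      rw [mul_comm]; exact (Nat.add_one_mul_choose_eq (n+1) j).symm
    have hc' : ((j:ℝ)+1) * (((n+2).choose (j+1) : ℝ)) = ((n:ℝ)+2) * ((n+1).choose j : ℝ) := by
      exact_mod_cast congrArg (Nat.cast : ℕ → ℝ) hc
    have hsub : n + 2 - (j+1) = n + 1 - j := by omega
    rw [hsub, rfac_succ' a c j]
    push_cast
    linear_combination ((j:ℝ) * a * rfac (a+c) c j * rfac b c (n+1-j)) * hc'
  rw [Finset.sum_congr rfl key, ← Finset.mul_sum, vander1 (a+c) b c n]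
  ring_nf

section Mod
variable (f : ℝ → ℝ) (δ : ℝ)

lemma mod_bddAbove (hf : ContinuousOn f (Set.Icc (0 : ℝ) 1)) : BddAbove {d : ℝ | ∃ u ∈ Set.Icc (0:ℝ) 1, ∃ v ∈ Set.Icc (0:ℝ) 1, |u - v| ≤ δ ∧ d = |f u - f v|} := by
  obtain ⟨C, hC⟩ := (isCompact_Icc (a := (0:ℝ)) (b := 1)).exists_bound_of_continuousOn hf
  refine ⟨2 * C, ?_⟩
  rintro d ⟨u, hu, v, hv, -, rfl⟩
  have h1 := hC u hu
  have h2 := hC v hv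
  simp only [Real.norm_eq_abs] at h1 h2
  calc |f u - f v| ≤ |f u| + |f v| := abs_sub _ _
    _ ≤ 2 * C := by linarith

lemma mod_nonneg (hf : ContinuousOn f (Set.Icc (0 : ℝ) 1)) (hδ : 0 < δ) : 0 ≤ modulus f 0 1 δ := by
  apply le_csSup (mod_bddAbove f δ hf)
  exact ⟨0, by norm_num, 0, by norm_num, by simp [le_of_lt hδ], by simp⟩

lemma mod_le (hf : ContinuousOn f (Set.Icc (0 : ℝ) 1)) (u v : ℝ) (hu : u ∈ Set.Icc (0:ℝ) 1) (hv : v ∈ Set.Icc (0:ℝ) 1)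
    (h : |u - v| ≤ δ) : |f u - f v| ≤ modulus f 0 1 δ :=
  le_csSup (mod_bddAbove f δ hf) ⟨u, hu, v, hv, h, rfl⟩

lemma mod_chain (hf : ContinuousOn f (Set.Icc (0 : ℝ) 1)) (hδ : 0 < δ) (u v : ℝ) (hu : u ∈ Set.Icc (0:ℝ) 1) (hv : v ∈ Set.Icc (0:ℝ) 1) :
    |f u - f v| ≤ (⌈|u - v| / δ⌉₊ : ℝ) * modulus f 0 1 δ := by
  rcases eq_or_ne u v with rfl | huv
  · simp
  set N : ℕ := ⌈|u - v| / δ⌉₊ with hN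
  have hdpos : 0 < |u - v| := abs_pos.mpr (sub_ne_zero.mpr huv)
  have hNpos : 0 < N := Nat.ceil_pos.mpr (div_pos hdpos hδ)
  have hNR : (0:ℝ) < N := by exact_mod_cast hNpos
  set w : ℕ → ℝ := fun i => v + i * ((u - v) / N) with hw
  have hw0 : w 0 = v := by simp [hw]
  have hwN : w N = u := by
    simp only [hw]
    field_simp
    ring
  have htel : f u - f v = ∑ i ∈ Finset.range N, (f (w (i+1)) - f (w i)) := by
    rw [Finset.sum_range_sub (fun i => f (w i)) N, hw0, hwN]
  have hwmem : ∀ i ≤ N, w i ∈ Set.Icc (0:ℝ) 1 := by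
    intro i hi
    have ht0 : (0:ℝ) ≤ (i:ℝ)/N := by positivity
    have ht1 : (i:ℝ)/N ≤ 1 := by
      rw [div_le_one hNR]; exact_mod_cast hi
    have : w i = (1 - (i:ℝ)/N) * v + ((i:ℝ)/N) * u := by
      simp only [hw]; field_simp; ring
    rw [this]
    constructor
    · nlinarith [hu.1, hu.2, hv.1, hv.2]
    · nlinarith [hu.1, hu.2, hv.1, hv.2]
  have hstep : ∀ i ∈ Finset.range N, |f (w (i+1)) - f (w i)| ≤ modulus f 0 1 δ := by
    intro i hi
    have hi' : i < N := Finset.mem_range.mp hi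
    apply mod_le f δ hf _ _ (hwmem (i+1) hi') (hwmem i (le_of_lt hi'))
    have : w (i+1) - w i = (u - v)/N := by simp only [hw]; push_cast; ring
    rw [this, abs_div, abs_of_pos hNR, div_le_iff₀ hNR]
    calc |u - v| ≤ (⌈|u - v| / δ⌉₊ : ℝ) * δ := by
          rw [← div_le_iff₀ hδ] ; exact Nat.le_ceil _
      _ = δ * N := by rw [hN]; ring
  calc |f u - f v| = |∑ i ∈ Finset.range N, (f (w (i+1)) - f (w i))| := by rw [htel]
    _ ≤ ∑ i ∈ Finset.range N, |f (w (i+1)) - f (w i)| := Finset.abs_sum_le_sum_abs _ _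
    _ ≤ ∑ _i ∈ Finset.range N, modulus f 0 1 δ := Finset.sum_le_sum hstep
    _ = N * modulus f 0 1 δ := by rw [Finset.sum_const, Finset.card_range, nsmul_eq_mul]

lemma mod_quad (hf : ContinuousOn f (Set.Icc (0 : ℝ) 1)) (hδ : 0 < δ) (u v : ℝ) (hu : u ∈ Set.Icc (0:ℝ) 1) (hv : v ∈ Set.Icc (0:ℝ) 1) :
    |f u - f v| ≤ (1 + ((u - v)/δ)^2) * modulus f 0 1 δ := by
  have hquad : (⌈|u - v| / δ⌉₊ : ℝ) ≤ 1 + ((u - v)/δ)^2 := by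
    set lam := |u - v| / δ with hlam
    have hlam0 : 0 ≤ lam := by positivity
    have hsq : ((u - v)/δ)^2 = lam^2 := by
      rw [hlam, div_pow, div_pow, sq_abs]
    rw [hsq]
    rcases le_or_gt lam 1 with h1 | h1
    · have : ⌈lam⌉₊ ≤ 1 := Nat.ceil_le.mpr (by simpa using h1)
      have : (⌈lam⌉₊ : ℝ) ≤ 1 := by exact_mod_cast this
      nlinarith
    · have h2 : (⌈lam⌉₊ : ℝ) < lam + 1 := Nat.ceil_lt_add_one hlam0
      nlinarith
  calc |f u - f v| ≤ (⌈|u - v| / δ⌉₊ : ℝ) * modulus f 0 1 δ := mod_chain f δ hf hδ u v hu hv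
    _ ≤ (1 + ((u - v)/δ)^2) * modulus f 0 1 δ :=
        mul_le_mul_of_nonneg_right hquad (mod_nonneg f δ hf hδ)

end Mod

section Polya
variable (x : ℝ) (N : ℕ)

lemma polya_step (hx : x ∈ Set.Icc (0:ℝ) 1) (j : ℕ) (hj : j ≤ N + 1) :
    -(min x (1 - x)) ≤ (j:ℝ) * (-(min x (1 - x)) / ((N:ℝ)+1)) := by
  set m := min x (1 - x) with hm
  have hm0 : 0 ≤ m := le_min hx.1 (by linarith [hx.2])
  have hNpos : (0:ℝ) < (N:ℝ) + 1 := by positivity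
  have hc' : ((N:ℝ)+1) * (-m / ((N:ℝ)+1)) = -m := by field_simp
  have hcle : -m / ((N:ℝ)+1) ≤ 0 :=
    div_nonpos_of_nonpos_of_nonneg (by linarith) (le_of_lt hNpos)
  have hjle : (j:ℝ) ≤ (N:ℝ) + 1 := by exact_mod_cast hj
  calc -m = ((N:ℝ)+1) * (-m / ((N:ℝ)+1)) := hc'.symm
    _ ≤ (j:ℝ) * (-m / ((N:ℝ)+1)) := mul_le_mul_of_nonpos_right hjle hcle

lemma polya_pos_facts (hx : x ∈ Set.Icc (0:ℝ) 1) :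
    let m := min x (1 - x); let c := -m / ((N:ℝ)+1);
    0 < rfac 1 c (N+2) ∧ 0 < rfac (1+c) c (N+1) ∧ 0 < rfac (1+2*c) c N ∧ 0 < 1 + c ∧
    (∀ k ≤ N + 2, 0 ≤ rfac x c k) ∧ (∀ k ≤ N + 2, 0 ≤ rfac (1-x) c k) := by
  intro m c
  have hstep := polya_step x N hx
  have hm0 : 0 ≤ m := le_min hx.1 (by linarith [hx.2])
  have hm2 : 2 * m ≤ 1 := by
    have h1 : m ≤ x := min_le_left _ _
    have h2 : m ≤ 1 - x := min_le_right _ _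
    linarith
  have hmx : m ≤ x := min_le_left _ _
  have hm1x : m ≤ 1 - x := min_le_right _ _
  have h1c : 0 < 1 + c := by
    have := hstep 1 (by omega)
    simp only [Nat.cast_one, one_mul] at this
    have : -m ≤ c := this
    linarith
  refine ⟨?_, ?_, ?_, h1c, ?_, ?_⟩
  · apply rfac_pos
    intro i hi
    have := hstep i (by omega)
    linarith
  · apply rfac_pos
    intro i hi
    have := hstep (i+1) (by omega)
    push_cast at this
    have h' : (1:ℝ) + c + i * c = 1 + (i+1) * c := by ring
    rw [h']
    linarith
  · apply rfac_pos
    intro i hi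
    have := hstep (i+2) (by omega)
    push_cast at this
    have h' : (1:ℝ) + 2*c + i * c = 1 + (i+2) * c := by ring
    rw [h']
    linarith
  · intro k hk
    apply rfac_nonneg
    intro i hi
    have := hstep i (by omega)
    linarith
  · intro k hk
    apply rfac_nonneg
    intro i hi
    have := hstep i (by omega)
    linarith

lemma polya_nonneg (hx : x ∈ Set.Icc (0:ℝ) 1) (k : ℕ) :
    0 ≤ polyaProb x (1-x) (-(min x (1 - x)) / ((N:ℝ)+1)) (N+2) k := by
  obtain ⟨hD, -, -, -, hxr, h1xr⟩ := polya_pos_facts x N hx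
  unfold polyaProb
  rw [show x + (1-x) = 1 by ring]
  rcases le_or_gt k (N+2) with hk | hk
  · apply div_nonneg _ (le_of_lt hD)
    apply mul_nonneg (mul_nonneg (by positivity) (hxr k hk))
    exact h1xr _ (by omega)
  · rw [Nat.choose_eq_zero_of_lt hk]
    simp

lemma polya_sum (hx : x ∈ Set.Icc (0:ℝ) 1) :
    ∑ k ∈ Finset.range (N+3), polyaProb x (1-x) (-(min x (1 - x)) / ((N:ℝ)+1)) (N+2) k = 1 := by
  obtain ⟨hD, -, -, -, -, -⟩ := polya_pos_facts x N hx
  set c := -(min x (1 - x)) / ((N:ℝ)+1) with hc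
  unfold polyaProb
  rw [show x + (1-x) = 1 by ring, ← Finset.sum_div]
  rw [show N + 3 = (N+2) + 1 by ring]
  rw [vander x (1-x) c (N+2), show x + (1-x) = 1 by ring]
  exact div_self (ne_of_gt hD)

lemma polya_mean (hx : x ∈ Set.Icc (0:ℝ) 1) :
    ∑ k ∈ Finset.range (N+3), polyaProb x (1-x) (-(min x (1 - x)) / ((N:ℝ)+1)) (N+2) k * (k:ℝ)
      = ((N:ℝ)+2) * x := by
  obtain ⟨hD, hR1, -, -, -, -⟩ := polya_pos_facts x N hx
  set c := -(min x (1 - x)) / ((N:ℝ)+1) with hc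
  unfold polyaProb
  rw [show x + (1-x) = 1 by ring]
  have hre : ∀ k ∈ Finset.range (N+3),
      (((N+2).choose k : ℝ) * rfac x c k * rfac (1-x) c (N+2-k) / rfac 1 c (N+2)) * (k:ℝ)
      = ((k:ℝ) * (((N+1+1).choose k : ℝ) * rfac x c k * rfac (1-x) c (N+1+1-k))) / rfac 1 c (N+2) := by
    intro k hk
    have : N + 2 = N + 1 + 1 := by ring
    rw [this]
    ring
  rw [Finset.sum_congr rfl hre, ← Finset.sum_div]
  rw [show N + 3 = (N+1+1) + 1 by ring]
  rw [vander1 x (1-x) c (N+1)]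
  have hDR : rfac 1 c (N+2) = rfac (1+c) c (N+1) := by
    have := rfac_succ' 1 c (N+1)
    rw [show (N+1)+1 = N+2 by ring] at this
    rw [this, one_mul]
  rw [show x + (1-x) + c = 1 + c by ring, hDR]
  rw [mul_div_assoc, div_self (ne_of_gt hR1)]
  push_cast
  ring

lemma polya_sq (hx : x ∈ Set.Icc (0:ℝ) 1) :
    ∑ k ∈ Finset.range (N+3), polyaProb x (1-x) (-(min x (1 - x)) / ((N:ℝ)+1)) (N+2) k * ((k:ℝ) * ((k:ℝ)-1))
      = ((N:ℝ)+2) * ((N:ℝ)+1) * x * (x + -(min x (1 - x)) / ((N:ℝ)+1))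
          / (1 + -(min x (1 - x)) / ((N:ℝ)+1)) := by
  obtain ⟨hD, hR1, hR2, h1c, -, -⟩ := polya_pos_facts x N hx
  set c := -(min x (1 - x)) / ((N:ℝ)+1) with hc
  unfold polyaProb
  rw [show x + (1-x) = 1 by ring]
  have hre : ∀ k ∈ Finset.range (N+3),
      (((N+2).choose k : ℝ) * rfac x c k * rfac (1-x) c (N+2-k) / rfac 1 c (N+2)) * ((k:ℝ) * ((k:ℝ)-1))
      = ((k:ℝ) * ((k:ℝ)-1) * (((N+2).choose k : ℝ) * rfac x c k * rfac (1-x) c (N+2-k))) / rfac 1 c (N+2) := by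
    intro k hk
    ring
  rw [Finset.sum_congr rfl hre, ← Finset.sum_div]
  rw [show N + 3 = (N+2) + 1 by ring]
  rw [vander2 x (1-x) c N]
  have hDR : rfac 1 c (N+2) = (1+c) * rfac (1+2*c) c N := by
    have h1 := rfac_succ' 1 c (N+1)
    rw [show (N+1)+1 = N+2 by ring] at h1
    have h2 := rfac_succ' (1+c) c N
    rw [h1, one_mul, h2]
    ring_nf
  rw [show x + (1-x) + 2*c = 1 + 2*c by ring, hDR]
  rw [div_mul_eq_div_div_swap, mul_div_assoc, div_self (ne_of_gt hR2)]
  ring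

end Polya


set_option maxHeartbeats 2000000 in
theorem Rop_modulus_estimate (f : ℝ → ℝ) (hf : ContinuousOn f (Set.Icc (0 : ℝ) 1))
    (n : ℕ) (hn : 1 < n) (x : ℝ) (hx : x ∈ Set.Icc (0 : ℝ) 1) :
    |Rop n f x - f x| ≤
      modulus f 0 1 ((n : ℝ) ^ (-(1 : ℝ) / 2)) *
        (1 + x * (1 - x) * (1 - min x (1 - x))) := by
  obtain ⟨N, rfl⟩ : ∃ N, n = N + 2 := ⟨n - 2, by omega⟩
  have hS0 := polya_sum x N hx
  have hS1 := polya_mean x N hx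
  have hS2 := polya_sq x N hx
  have hPnn := polya_nonneg x N hx
  obtain ⟨hD, hR1, hR2, h1c, hxr, h1xr⟩ := polya_pos_facts x N hx
  set m := min x (1 - x) with hmdef
  set c := -m / ((N:ℝ)+1) with hcdef
  set nr : ℝ := (N:ℝ) + 2 with hnrdef
  have hnn : ((N+2:ℕ):ℝ) = nr := by push_cast [hnrdef]; ring
  have hnrpos : (0:ℝ) < nr := by rw [hnrdef]; positivity
  set δ := ((N+2:ℕ):ℝ) ^ (-(1 : ℝ) / 2) with hδdef
  have hδpos : 0 < δ := Real.rpow_pos_of_pos (by positivity) _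
  have hδsq : δ^2 = 1/nr := by
    have hb : (0:ℝ) ≤ ((N+2:ℕ):ℝ) := by positivity
    have h2 : δ^(2:ℕ) = ((N+2:ℕ):ℝ) ^ ((-(1:ℝ)/2) * (2:ℕ)) := by
      rw [hδdef, ← Real.rpow_natCast (((N+2:ℕ):ℝ) ^ (-(1:ℝ)/2)) 2, ← Real.rpow_mul hb]
    rw [h2]
    norm_num
    rw [Real.rpow_neg_one]
  set ω := modulus f 0 1 δ with hωdef
  have hω0 : 0 ≤ ω := mod_nonneg f δ hf hδpos
  set P : ℕ → ℝ := fun k => polyaProb x (1-x) c (N+2) k with hP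
  -- basic facts about m, x
  have hm0 : 0 ≤ m := le_min hx.1 (by linarith [hx.2])
  have hm2 : 2*m ≤ 1 := by
    have h1 : m ≤ x := min_le_left _ _
    have h2 : m ≤ 1 - x := min_le_right _ _
    linarith
  -- rewrite Rop
  have hRop : Rop (N+2) f x = ∑ k ∈ Finset.range (N+3), P k * f ((k:ℝ)/nr) := by
    unfold Rop
    rw [show N+2+1 = N+3 by omega]
    apply Finset.sum_congr rfl
    intro k hk
    have hc1 : -(min x (1-x)) / (((N+2:ℕ):ℝ) - 1) = c := by
      rw [hcdef, ← hmdef, hnn, hnrdef]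
      norm_num
      ring_nf
    rw [hc1, hnn]
  -- variance bound
  have hpt : ∀ k ∈ Finset.range (N+3), P k * (((k:ℝ)/nr - x)^2)
      = (P k * ((k:ℝ)*((k:ℝ)-1))) * (1/nr^2) + (P k * (k:ℝ)) * (1/nr^2)
        - (P k * (k:ℝ)) * (2*x/nr) + P k * x^2 := by
    intro k hk
    have hnr0 : nr ≠ 0 := ne_of_gt hnrpos
    field_simp
    ring
  have hVsum : ∑ k ∈ Finset.range (N+3), P k * (((k:ℝ)/nr - x)^2)
      = (((N:ℝ)+2) * ((N:ℝ)+1) * x * (x + c) / (1 + c)) * (1/nr^2)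
        + (((N:ℝ)+2) * x) * (1/nr^2) - (((N:ℝ)+2) * x) * (2*x/nr) + 1 * x^2 := by
    rw [Finset.sum_congr rfl hpt]
    simp only [Finset.sum_add_distrib, Finset.sum_sub_distrib, ← Finset.sum_mul]
    rw [hS0, hS1, hS2]
  have hVar : nr * (∑ k ∈ Finset.range (N+3), P k * (((k:ℝ)/nr - x)^2)) ≤ x*(1-x)*(1-m) := by
    have hden : (0:ℝ) < (N:ℝ) + 1 - m := by
      have : (0:ℝ) < (N:ℝ) + 1 := by positivity
      linarith
    have hNpos : (0:ℝ) < (N:ℝ) + 1 := by positivity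
    have hx01 : 0 ≤ x * (1-x) := mul_nonneg hx.1 (by linarith [hx.2])
    have hS2' : (((N:ℝ)+2) * ((N:ℝ)+1) * x * (x + c) / (1 + c))
        = ((N:ℝ)+2) * x * (((N:ℝ)+1) * x - m) * ((N:ℝ)+1) / ((N:ℝ)+1-m) := by
      have h1c' : (1:ℝ) + c ≠ 0 := ne_of_gt h1c
      rw [div_eq_div_iff h1c' hden.ne', hcdef]
      field_simp
      ring
    rw [hVsum, hS2']
    have hnr0 : nr ≠ 0 := ne_of_gt hnrpos
    have hEq : x*(1-x)*(1-m)
        - nr * ((((N:ℝ)+2) * x * (((N:ℝ)+1) * x - m) * ((N:ℝ)+1) / ((N:ℝ)+1-m)) * (1/nr^2)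
          + (((N:ℝ)+2) * x) * (1/nr^2) - (((N:ℝ)+2) * x) * (2*x/nr) + 1 * x^2)
        = x*(1-x)*m^2 / ((N:ℝ)+1-m) := by
      rw [hnrdef]
      field_simp [hden.ne']
      ring
    have hpos : 0 ≤ x*(1-x)*m^2 / ((N:ℝ)+1-m) := by positivity
    linarith
  -- pointwise estimate
  have hterm : ∀ k ∈ Finset.range (N+3),
      |P k * (f ((k:ℝ)/nr) - f x)| ≤ ω * P k + (ω * nr) * (P k * (((k:ℝ)/nr - x)^2)) := by
    intro k hk
    have hkle : k ≤ N + 2 := by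
      have := Finset.mem_range.mp hk; omega
    have hkn : (k:ℝ)/nr ∈ Set.Icc (0:ℝ) 1 := by
      constructor
      · positivity
      · rw [div_le_one hnrpos]
        rw [hnrdef]
        exact_mod_cast hkle
    have hq := mod_quad f δ hf hδpos ((k:ℝ)/nr) x hkn hx
    have hsq : (((k:ℝ)/nr - x)/δ)^2 = nr * (((k:ℝ)/nr - x)^2) := by
      rw [div_pow, hδsq, div_div_eq_mul_div, div_one]
      ring
    rw [abs_mul, abs_of_nonneg (hPnn k)]
    calc P k * |f ((k:ℝ)/nr) - f x|
        ≤ P k * ((1 + (((k:ℝ)/nr - x)/δ)^2) * ω) := mul_le_mul_of_nonneg_left hq (hPnn k)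
      _ = ω * P k + (ω * nr) * (P k * (((k:ℝ)/nr - x)^2)) := by rw [hsq]; ring
  -- assemble
  have hdiff : ∑ k ∈ Finset.range (N+3), P k * (f ((k:ℝ)/nr) - f x)
      = Rop (N+2) f x - f x := by
    simp only [mul_sub]
    rw [Finset.sum_sub_distrib, ← Finset.sum_mul, hS0, one_mul, hRop]
  rw [← hdiff]
  calc |∑ k ∈ Finset.range (N+3), P k * (f ((k:ℝ)/nr) - f x)|
      ≤ ∑ k ∈ Finset.range (N+3), |P k * (f ((k:ℝ)/nr) - f x)| :=
        Finset.abs_sum_le_sum_abs _ _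
    _ ≤ ∑ k ∈ Finset.range (N+3), (ω * P k + (ω * nr) * (P k * (((k:ℝ)/nr - x)^2))) :=
        Finset.sum_le_sum hterm
    _ = ω * 1 + (ω * nr) * (∑ k ∈ Finset.range (N+3), P k * (((k:ℝ)/nr - x)^2)) := by
        rw [Finset.sum_add_distrib, ← Finset.mul_sum, ← Finset.mul_sum, hS0]
    _ ≤ ω * (1 + x * (1-x) * (1-m)) := by nlinarith [hω0, hVar, mul_le_mul_of_nonneg_left hVar hω0]
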